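/- arXiv:1003.2432 — 10 statements merged into one kernel-verified Lean document; each statement's English description precedes it below -/
import Mathlib

section
/- If (R,P) is a Rota-Baxter algebra of weight 0 over a commutative ring k, then the operations x ≺ y := x·P(y) and x ≻ y := P(x)·y make R into a dendriform dialgebra, i.e., (x≺y)≺z = x≺(y⋆z), (x≻y)≺z = x≻(y≺z), and x≻(y≻z) = (x⋆y)≻z, where x⋆y = x≺y + x≻y. -/
/-- A Rota-Baxter algebra (R, P) of weight 0 over a commutative ring k
gives a dendriform dialgebra via x ≺ y = x·P(y), x ≻ y = P(x)·y. -/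
theorem rota_baxter_weight_zero_dendriform
    (k : Type*) [CommRing k] (R : Type*) [AddCommGroup R] [Module k R]
    (mul : R →ₗ[k] R →ₗ[k] R)
    (mul_assoc : ∀ x y z : R, mul (mul x y) z = mul x (mul y z))
    (P : R →ₗ[k] R)
    (hP : ∀ x y : R, mul (P x) (P y) = P (mul (P x) y) + P (mul x (P y))) :
    ∀ x y z : R,
      -- (x ≺ y) ≺ z = x ≺ (y ⋆ z)
      mul (mul x (P y)) (P z)
        = mul x (P (mul y (P z) + mul (P y) z)) ∧
      -- (x ≻ y) ≺ z = x ≻ (y ≺ z)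
      mul (mul (P x) y) (P z) = mul (P x) (mul y (P z)) ∧
      -- x ≻ (y ≻ z) = (x ⋆ y) ≻ z
      mul (P x) (mul (P y) z)
        = mul (P (mul x (P y) + mul (P x) y)) z := by
  intro x y z
  refine ⟨?_, mul_assoc _ _ _, ?_⟩
  · rw [mul_assoc, map_add, add_comm, ← hP]
  · rw [map_add, add_comm, ← hP, mul_assoc]
end

section
/- If (R,P) is a Rota-Baxter algebra of weight λ over a commutative ring k, then the operations x ≺ y := x·P(y), x ≻ y := P(x)·y, and x • y := λ(x·y) make R into a dendriform trialgebra. -/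
/-- A Rota-Baxter algebra (R,P) of weight λ gives a dendriform
trialgebra via x ≺ y = x·P(y), x ≻ y = P(x)·y, x • y = λ(x·y). -/
theorem rota_baxter_dendriform_trialgebra
    (k : Type*) [CommRing k] (R : Type*) [AddCommGroup R] [Module k R]
    (mul : R →ₗ[k] R →ₗ[k] R)
    (mul_assoc : ∀ x y z : R, mul (mul x y) z = mul x (mul y z))
    (lam : k) (P : R →ₗ[k] R)
    (hP : ∀ x y : R,
      mul (P x) (P y) = P (mul (P x) y) + P (mul x (P y)) + lam • P (mul x y)) :
    ∀ x y z : R,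
      -- ⋆ abbreviations: x ⋆ y = x ≺ y + x ≻ y + x • y
      -- (x ≺ y) ≺ z = x ≺ (y ⋆ z)
      mul (mul x (P y)) (P z)
        = mul x (P (mul y (P z) + mul (P y) z + lam • mul y z)) ∧
      -- (x ≻ y) ≺ z = x ≻ (y ≺ z)
      mul (mul (P x) y) (P z) = mul (P x) (mul y (P z)) ∧
      -- (x ⋆ y) ≻ z = x ≻ (y ≻ z)
      mul (P (mul x (P y) + mul (P x) y + lam • mul x y)) z
        = mul (P x) (mul (P y) z) ∧
      -- (x ≻ y) • z = x ≻ (y • z)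
      lam • mul (mul (P x) y) z = mul (P x) (lam • mul y z) ∧
      -- (x ≺ y) • z = x • (y ≻ z)
      lam • mul (mul x (P y)) z = lam • mul x (mul (P y) z) ∧
      -- (x • y) ≺ z = x • (y ≺ z)
      mul (lam • mul x y) (P z) = lam • mul x (mul y (P z)) ∧
      -- (x • y) • z = x • (y • z)
      lam • mul (lam • mul x y) z = lam • mul x (lam • mul y z) := by
  intro x y z
  refine ⟨?_, ?_, ?_, ?_, ?_, ?_, ?_⟩
  · rw [mul_assoc, hP]
    simp [map_add, map_smul]; abel
  · exact mul_assoc _ _ _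
  · rw [← mul_assoc]
    congr 1
    rw [hP]
    simp [map_add, map_smul]; abel
  · simp [mul_assoc]
  · simp [mul_assoc]
  · simp [mul_assoc]
  · simp [mul_assoc, smul_smul, mul_comm]
end

section
/- Let (A,*) be an associative algebra, (R,∘,ℓ,r) an A-bimodule k-algebra, and α : R → A an O-operator on the algebra R of weight λ. Then the operations u ≺ v := u r(α(v)), u ≻ v := ℓ(α(u))v, u • v := λ(u∘v) define a dendriform trialgebra structure on R. -/
/-- An O-operator α : R → A on an A-bimodule k-algebra
(R,∘,ℓ,r) of weight λ induces a dendriform trialgebra structure on R via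
u ≺ v = u r(α(v)), u ≻ v = ℓ(α(u))v, u • v = λ(u∘v). Here `l x v` is ℓ(x)v
and `r x v` is v r(x). -/
theorem O_operator_dendriform_trialgebra_domain
    (k : Type*) [CommRing k]
    (A : Type*) [AddCommGroup A] [Module k A]
    (R : Type*) [AddCommGroup R] [Module k R]
    (mulA : A →ₗ[k] A →ₗ[k] A)
    (mulA_assoc : ∀ x y z : A, mulA (mulA x y) z = mulA x (mulA y z))
    (mulR : R →ₗ[k] R →ₗ[k] R)
    (mulR_assoc : ∀ u v w : R, mulR (mulR u v) w = mulR u (mulR v w))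
    (l r : A →ₗ[k] Module.End k R)
    (hl : ∀ x y : A, ∀ v : R, l (mulA x y) v = l x (l y v))
    (hr : ∀ x y : A, ∀ v : R, r (mulA x y) v = r y (r x v))
    (hlr : ∀ x y : A, ∀ v : R, r y (l x v) = l x (r y v))
    (hc1 : ∀ x : A, ∀ v w : R, l x (mulR v w) = mulR (l x v) w)
    (hc2 : ∀ x : A, ∀ v w : R, r x (mulR v w) = mulR v (r x w))
    (hc3 : ∀ x : A, ∀ v w : R, mulR (r x v) w = mulR v (l x w))
    (lam : k) (α : R →ₗ[k] A)
    (hα : ∀ u v : R,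
      mulA (α u) (α v)
        = α (l (α u) v) + α (r (α v) u) + lam • α (mulR u v)) :
    ∀ u v w : R,
      -- (u ≺ v) ≺ w = u ≺ (v ⋆ w)
      r (α w) (r (α v) u)
        = r (α (r (α w) v + l (α v) w + lam • mulR v w)) u ∧
      -- (u ≻ v) ≺ w = u ≻ (v ≺ w)
      r (α w) (l (α u) v) = l (α u) (r (α w) v) ∧
      -- (u ⋆ v) ≻ w = u ≻ (v ≻ w)
      l (α (r (α v) u + l (α u) v + lam • mulR u v)) w
        = l (α u) (l (α v) w) ∧
      -- (u ≻ v) • w = u ≻ (v • w)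
      lam • mulR (l (α u) v) w = l (α u) (lam • mulR v w) ∧
      -- (u ≺ v) • w = u • (v ≻ w)
      lam • mulR (r (α v) u) w = lam • mulR u (l (α v) w) ∧
      -- (u • v) ≺ w = u • (v ≺ w)
      r (α w) (lam • mulR u v) = lam • mulR u (r (α w) v) ∧
      -- (u • v) • w = u • (v • w)
      lam • mulR (lam • mulR u v) w = lam • mulR u (lam • mulR v w) := by
  intro u v w
  have key : ∀ a b : R, α (r (α b) a + l (α a) b + lam • mulR a b)
      = mulA (α a) (α b) := by
    intro a b
    rw [map_add, map_add, map_smul, hα a b]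
    abel
  refine ⟨?_, ?_, ?_, ?_, ?_, ?_, ?_⟩
  · rw [key v w, hr]
  · exact (hlr (α u) (α w) v).symm ▸ rfl
  · rw [key u v, hl]
  · rw [map_smul, hc1]
  · rw [hc3]
  · rw [map_smul, hc2]
  · simp only [map_smul, LinearMap.smul_apply, smul_smul, mulR_assoc, mul_comm]
end

section
/- Let (A,*) be an associative algebra, (R,∘,ℓ,r) an A-bimodule k-algebra, and α : R → A an O-operator on the algebra R of weight λ. Define ⋆ on R by u ⋆ v := u r(α(v)) + ℓ(α(u))v + λ(u∘v). Then ⋆ is an associative product on R and α : (R,⋆) → (A,*) is a k-algebra homomorphism. -/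
/-- For an O-operator α : R → A on an A-bimodule k-algebra of
weight λ, the product u ⋆ v = u r(α(v)) + ℓ(α(u))v + λ(u∘v) is associative
and α : (R,⋆) → (A,*) is an algebra homomorphism. -/
theorem O_operator_star_assoc_and_hom
    (k : Type*) [CommRing k]
    (A : Type*) [AddCommGroup A] [Module k A]
    (R : Type*) [AddCommGroup R] [Module k R]
    (mulA : A →ₗ[k] A →ₗ[k] A)
    (mulA_assoc : ∀ x y z : A, mulA (mulA x y) z = mulA x (mulA y z))
    (mulR : R →ₗ[k] R →ₗ[k] R)
    (mulR_assoc : ∀ u v w : R, mulR (mulR u v) w = mulR u (mulR v w))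
    (l r : A →ₗ[k] Module.End k R)
    (hl : ∀ x y : A, ∀ v : R, l (mulA x y) v = l x (l y v))
    (hr : ∀ x y : A, ∀ v : R, r (mulA x y) v = r y (r x v))
    (hlr : ∀ x y : A, ∀ v : R, r y (l x v) = l x (r y v))
    (hc1 : ∀ x : A, ∀ v w : R, l x (mulR v w) = mulR (l x v) w)
    (hc2 : ∀ x : A, ∀ v w : R, r x (mulR v w) = mulR v (r x w))
    (hc3 : ∀ x : A, ∀ v w : R, mulR (r x v) w = mulR v (l x w))
    (lam : k) (α : R →ₗ[k] A)
    (hα : ∀ u v : R,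
      mulA (α u) (α v)
        = α (l (α u) v) + α (r (α v) u) + lam • α (mulR u v)) :
    -- ⋆ is associative:
    (∀ u v w : R,
      (fun a b : R => r (α b) a + l (α a) b + lam • mulR a b)
          ((fun a b : R => r (α b) a + l (α a) b + lam • mulR a b) u v) w
        = (fun a b : R => r (α b) a + l (α a) b + lam • mulR a b) u
            ((fun a b : R => r (α b) a + l (α a) b + lam • mulR a b) v w)) ∧
    -- α is a k-algebra homomorphism from (R,⋆) to (A,*):
    (∀ u v : R,
      α (r (α v) u + l (α u) v + lam • mulR u v) = mulA (α u) (α v)) := by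

  have hom : ∀ u v : R,
      α (r (α v) u + l (α u) v + lam • mulR u v) = mulA (α u) (α v) := by
    intro u v
    rw [hα u v]
    simp only [map_add, map_smul]
    abel
  refine ⟨?_, hom⟩
  intro u v w
  simp only []
  have key : α (r (α v) u + l (α u) v + lam • mulR u v) = mulA (α u) (α v) := hom u v
  have key2 : α (r (α w) v + l (α v) w + lam • mulR v w) = mulA (α v) (α w) := hom v w
  rw [key, key2]
  simp only [map_add, map_smul, LinearMap.add_apply, LinearMap.smul_apply, smul_add]
  rw [hl (α u) (α v) w, hr (α v) (α w) u, hlr (α u) (α w) v, hc2 (α w) u v,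
    hc1 (α u) v w, hc3 (α v) u w, mulR_assoc]
  abel
end

section
/- Let (A,*) be an associative algebra, (V,ℓ,r) an A-bimodule, and α : V → A an O-operator on the module V. Then u ≺ v := u r(α(v)) and u ≻ v := ℓ(α(u))v define a dendriform dialgebra structure on V, and α : (V, ≺+≻) → (A,*) is a k-algebra homomorphism. -/
/-- An O-operator α : V → A on an A-bimodule (V,ℓ,r) induces a
dendriform dialgebra structure on V via u ≺ v = u r(α(v)), u ≻ v = ℓ(α(u))v,
and α : (V, ≺+≻) → (A,*) is an algebra homomorphism. -/
theorem O_operator_dendriform_dialgebra_domain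
    (k : Type*) [CommRing k]
    (A : Type*) [AddCommGroup A] [Module k A]
    (V : Type*) [AddCommGroup V] [Module k V]
    (mulA : A →ₗ[k] A →ₗ[k] A)
    (mulA_assoc : ∀ x y z : A, mulA (mulA x y) z = mulA x (mulA y z))
    (l r : A →ₗ[k] Module.End k V)
    (hl : ∀ x y : A, ∀ v : V, l (mulA x y) v = l x (l y v))
    (hr : ∀ x y : A, ∀ v : V, r (mulA x y) v = r y (r x v))
    (hlr : ∀ x y : A, ∀ v : V, r y (l x v) = l x (r y v))
    (α : V →ₗ[k] A)
    (hα : ∀ u v : V,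
      mulA (α u) (α v) = α (l (α u) v) + α (r (α v) u)) :
    (∀ u v w : V,
      -- (u ≺ v) ≺ w = u ≺ (v ⋆ w)
      r (α w) (r (α v) u) = r (α (r (α w) v + l (α v) w)) u ∧
      -- (u ≻ v) ≺ w = u ≻ (v ≺ w)
      r (α w) (l (α u) v) = l (α u) (r (α w) v) ∧
      -- u ≻ (v ≻ w) = (u ⋆ v) ≻ w
      l (α u) (l (α v) w) = l (α (r (α v) u + l (α u) v)) w) ∧
    -- α is a k-algebra homomorphism from (V, ≺+≻) to (A,*)
    (∀ u v : V, α (r (α v) u + l (α u) v) = mulA (α u) (α v)) := by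
  refine ⟨fun u v w => ⟨?_, ?_, ?_⟩, fun u v => ?_⟩
  · have : α (r (α w) v + l (α v) w) = mulA (α v) (α w) := by
      rw [map_add, add_comm, hα]
    rw [this, hr]
  · exact hlr _ _ _
  · have : α (r (α v) u + l (α u) v) = mulA (α u) (α v) := by
      rw [map_add, add_comm, hα]
    rw [this, hl]
  · rw [map_add, add_comm, hα]
end

section
/- Let (V, ≺, ≻, •) be a dendriform trialgebra and define x * y := x≺y + x≻y + x•y. Define L_≻, R_≺ : V → End(V) by L_≻(x)(y) = x≻y and R_≺(x)(y) = y≺x. Then (V, •, L_≻, R_≺) is a (V,*)-bimodule k-algebra. -/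
/-- For a dendriform trialgebra (V,≺,≻,•) with
x * y = x≺y + x≻y + x•y, the data (V, •, L_≻, R_≺), where L_≻(x)y = x≻y and
y R_≺(x) = y≺x, is a (V,*)-bimodule k-algebra. -/
theorem dendriform_trialgebra_bimodule_algebra
    (k : Type*) [CommRing k] (V : Type*) [AddCommGroup V] [Module k V]
    (prec succ bul : V →ₗ[k] V →ₗ[k] V)
    (ax1 : ∀ x y z : V,
      prec (prec x y) z = prec x (prec y z + succ y z + bul y z))
    (ax2 : ∀ x y z : V, prec (succ x y) z = succ x (prec y z))
    (ax3 : ∀ x y z : V,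
      succ (prec x y + succ x y + bul x y) z = succ x (succ y z))
    (ax4 : ∀ x y z : V, bul (succ x y) z = succ x (bul y z))
    (ax5 : ∀ x y z : V, bul (prec x y) z = bul x (succ y z))
    (ax6 : ∀ x y z : V, prec (bul x y) z = bul x (prec y z))
    (ax7 : ∀ x y z : V, bul (bul x y) z = bul x (bul y z)) :
    -- the product * = ≺ + ≻ + • is associative
    (∀ x y z : V,
      prec (prec x y + succ x y + bul x y) z
        + succ (prec x y + succ x y + bul x y) z
        + bul (prec x y + succ x y + bul x y) z
      = prec x (prec y z + succ y z + bul y z)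
        + succ x (prec y z + succ y z + bul y z)
        + bul x (prec y z + succ y z + bul y z)) ∧
    -- (V, •) is a k-algebra
    (∀ v w u : V, bul (bul v w) u = bul v (bul w u)) ∧
    ∀ x y v w : V,
      -- L_≻(x*y)v = L_≻(x)(L_≻(y)v)
      succ (prec x y + succ x y + bul x y) v = succ x (succ y v) ∧
      -- v R_≺(x*y) = (v R_≺(x)) R_≺(y)
      prec v (prec x y + succ x y + bul x y) = prec (prec v x) y ∧
      -- (L_≻(x)v) R_≺(y) = L_≻(x)(v R_≺(y))
      prec (succ x v) y = succ x (prec v y) ∧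
      -- L_≻(x)(v • w) = (L_≻(x)v) • w
      succ x (bul v w) = bul (succ x v) w ∧
      -- (v • w) R_≺(x) = v • (w R_≺(x))
      prec (bul v w) x = bul v (prec w x) ∧
      -- (v R_≺(x)) • w = v • (L_≻(x)w)
      bul (prec v x) w = bul v (succ x w) := by
  refine ⟨fun x y z => ?_, ax7, fun x y v w => ⟨ax3 x y v, ?_, ax2 x v y, (ax4 x v w).symm, ax6 v w x, ax5 v x w⟩⟩
  · rw [ax3]
    simp only [map_add, LinearMap.add_apply, ax1, ax2, ax4, ax5, ax6, ax7]
    abel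
  · simp only [map_add, ax1, ax2, ax6]
end

section
/- Let α : R → A be an O-operator on the algebra (R,∘,ℓ,r) of weight λ whose kernel is a two-sided ideal of (R,∘). Then for u,u',v,v' ∈ R with α(u)=α(u') and α(v)=α(v'), one has α(u r(α(v))) = α(u' r(α(v'))), α(ℓ(α(u))v) = α(ℓ(α(u'))v'), and α(u∘v) = α(u'∘v'). -/
/-- For an O-operator α : R → A of weight λ whose kernel is an
ideal of (R,∘), the induced operations on α(R) are well defined. -/
theorem O_operator_range_well_defined
    (k : Type*) [CommRing k]
    (A : Type*) [AddCommGroup A] [Module k A]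
    (R : Type*) [AddCommGroup R] [Module k R]
    (mulA : A →ₗ[k] A →ₗ[k] A)
    (mulA_assoc : ∀ x y z : A, mulA (mulA x y) z = mulA x (mulA y z))
    (mulR : R →ₗ[k] R →ₗ[k] R)
    (mulR_assoc : ∀ u v w : R, mulR (mulR u v) w = mulR u (mulR v w))
    (l r : A →ₗ[k] Module.End k R)
    (hl : ∀ x y : A, ∀ v : R, l (mulA x y) v = l x (l y v))
    (hr : ∀ x y : A, ∀ v : R, r (mulA x y) v = r y (r x v))
    (hlr : ∀ x y : A, ∀ v : R, r y (l x v) = l x (r y v))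
    (hc1 : ∀ x : A, ∀ v w : R, l x (mulR v w) = mulR (l x v) w)
    (hc2 : ∀ x : A, ∀ v w : R, r x (mulR v w) = mulR v (r x w))
    (hc3 : ∀ x : A, ∀ v w : R, mulR (r x v) w = mulR v (l x w))
    (lam : k) (α : R →ₗ[k] A)
    (hα : ∀ u v : R,
      mulA (α u) (α v)
        = α (l (α u) v) + α (r (α v) u) + lam • α (mulR u v))
    -- ker α is a two-sided ideal of (R,∘)
    (hker : ∀ u v : R, α u = 0 → α (mulR u v) = 0 ∧ α (mulR v u) = 0) :
    ∀ u u' v v' : R, α u = α u' → α v = α v' →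
      α (r (α v) u) = α (r (α v') u') ∧
      α (l (α u) v) = α (l (α u') v') ∧
      α (mulR u v) = α (mulR u' v') := by
  intro u u' v v' hu hv
  have hw : α (u - u') = 0 := by rw [map_sub, hu, sub_self]
  have hz : α (v - v') = 0 := by rw [map_sub, hv, sub_self]
  have hkw := hker _ v hw
  have hkz := hker _ u' hz
  -- α (r (α v) (u - u')) = 0
  have h1 : α (r (α v) (u - u')) = 0 := by
    have := hα (u - u') v
    rw [hw, map_zero, LinearMap.zero_apply, map_zero, LinearMap.zero_apply,
      map_zero, hkw.1, smul_zero, zero_add, add_zero] at this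
    exact this.symm
  -- α (l (α u) (v - v')) = 0
  have h2 : α (l (α u) (v - v')) = 0 := by
    have := hα u (v - v')
    rw [hz, map_zero, LinearMap.map_zero, LinearMap.zero_apply, map_zero] at this
    have hmz : α (mulR u (v - v')) = 0 := (hker _ u hz).2
    rw [hmz, smul_zero, add_zero, add_zero] at this
    exact this.symm
  refine ⟨?_, ?_, ?_⟩
  · have : α (r (α v) u) - α (r (α v) u') = 0 := by
      rw [← map_sub, ← map_sub]; exact h1
    rw [hv] at this ⊢
    exact sub_eq_zero.mp this
  · have : α (l (α u) v) - α (l (α u) v') = 0 := by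
      rw [← map_sub, ← map_sub]; exact h2
    rw [hu] at this ⊢
    exact sub_eq_zero.mp this
  · have key : mulR u v - mulR u' v' = mulR (u - u') v + mulR u' (v - v') := by
      simp [map_sub, LinearMap.sub_apply]
    have : α (mulR u v) - α (mulR u' v') = 0 := by
      rw [← map_sub, key, map_add, hkw.1, hkz.2, add_zero]
    exact sub_eq_zero.mp this
end

section
/- Let α : R → A be an invertible (bijective) O-operator on the algebra (R,∘,ℓ,r) of weight λ. Then the operations x ≺ y := α(α⁻¹(x) r(y)), x ≻ y := α(ℓ(x) α⁻¹(y)), x • y := λ α(α⁻¹(x) ∘ α⁻¹(y)) define a dendriform trialgebra structure on A, and the associative product on A splits: x*y = x≺y + x≻y + x•y for all x,y ∈ A. -/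
/-- An invertible O-operator α : R → A on the algebra
(R,∘,ℓ,r) of weight λ induces a dendriform trialgebra structure on A via
x ≺ y = α(α⁻¹(x) r(y)), x ≻ y = α(ℓ(x) α⁻¹(y)), x • y = λα(α⁻¹(x)∘α⁻¹(y)),
and the associative product of A splits as * = ≺ + ≻ + •. -/
theorem invertible_O_operator_dendriform_trialgebra_range
    (k : Type*) [CommRing k]
    (A : Type*) [AddCommGroup A] [Module k A]
    (R : Type*) [AddCommGroup R] [Module k R]
    (mulA : A →ₗ[k] A →ₗ[k] A)
    (mulA_assoc : ∀ x y z : A, mulA (mulA x y) z = mulA x (mulA y z))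
    (mulR : R →ₗ[k] R →ₗ[k] R)
    (mulR_assoc : ∀ u v w : R, mulR (mulR u v) w = mulR u (mulR v w))
    (l r : A →ₗ[k] Module.End k R)
    (hl : ∀ x y : A, ∀ v : R, l (mulA x y) v = l x (l y v))
    (hr : ∀ x y : A, ∀ v : R, r (mulA x y) v = r y (r x v))
    (hlr : ∀ x y : A, ∀ v : R, r y (l x v) = l x (r y v))
    (hc1 : ∀ x : A, ∀ v w : R, l x (mulR v w) = mulR (l x v) w)
    (hc2 : ∀ x : A, ∀ v w : R, r x (mulR v w) = mulR v (r x w))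
    (hc3 : ∀ x : A, ∀ v w : R, mulR (r x v) w = mulR v (l x w))
    (lam : k) (α : R ≃ₗ[k] A)
    (hα : ∀ u v : R,
      mulA (α u) (α v)
        = α (l (α u) v) + α (r (α v) u) + lam • α (mulR u v)) :
    let prec : A → A → A := fun x y => α (r y (α.symm x))
    let succ : A → A → A := fun x y => α (l x (α.symm y))
    let bul : A → A → A := fun x y => lam • α (mulR (α.symm x) (α.symm y))
    let star : A → A → A := fun x y => prec x y + succ x y + bul x y
    -- dendriform trialgebra axioms
    (∀ x y z : A,
      prec (prec x y) z = prec x (star y z) ∧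
      prec (succ x y) z = succ x (prec y z) ∧
      succ (star x y) z = succ x (succ y z) ∧
      bul (succ x y) z = succ x (bul y z) ∧
      bul (prec x y) z = bul x (succ y z) ∧
      prec (bul x y) z = bul x (prec y z) ∧
      bul (bul x y) z = bul x (bul y z)) ∧
    -- splitting of the associative product of A
    (∀ x y : A, mulA x y = star x y) := by
  intro prec succ bul star
  have hsplit : ∀ x y : A, mulA x y = star x y := by
    intro x y
    have h := hα (α.symm x) (α.symm y)
    simp only [LinearEquiv.apply_symm_apply] at h
    simpa [star, prec, succ, bul, add_comm, add_assoc, add_left_comm] using h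
  refine ⟨?_, hsplit⟩
  intro x y z
  refine ⟨?_, ?_, ?_, ?_, ?_, ?_, ?_⟩
  · show α (r z (α.symm (α (r y (α.symm x))))) = α (r (star y z) (α.symm x))
    rw [← hsplit, α.symm_apply_apply, hr]
  · show α (r z (α.symm (α (l x (α.symm y))))) = α (l x (α.symm (α (r z (α.symm y)))))
    rw [α.symm_apply_apply, α.symm_apply_apply, hlr]
  · show α (l (star x y) (α.symm z)) = α (l x (α.symm (α (l y (α.symm z)))))
    rw [← hsplit, α.symm_apply_apply, hl]
  · show lam • α (mulR (α.symm (α (l x (α.symm y)))) (α.symm z))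
      = α (l x (α.symm (lam • α (mulR (α.symm y) (α.symm z)))))
    simp only [map_smul, α.symm_apply_apply, hc1]
  · show lam • α (mulR (α.symm (α (r y (α.symm x)))) (α.symm z))
      = lam • α (mulR (α.symm x) (α.symm (α (l y (α.symm z)))))
    simp only [α.symm_apply_apply, hc3]
  · show α (r z (α.symm (lam • α (mulR (α.symm x) (α.symm y)))))
      = lam • α (mulR (α.symm x) (α.symm (α (r z (α.symm y)))))
    simp only [map_smul, α.symm_apply_apply, hc2]
  · show lam • α (mulR (α.symm (lam • α (mulR (α.symm x) (α.symm y)))) (α.symm z))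
      = lam • α (mulR (α.symm x) (α.symm (lam • α (mulR (α.symm y) (α.symm z)))))
    simp only [map_smul, α.symm_apply_apply, LinearMap.smul_apply, mulR_assoc]
end

section
/- Let α : V → A be an invertible O-operator on the A-bimodule (V,ℓ,r). Then x ≺ y := α(α⁻¹(x) r(y)) and x ≻ y := α(ℓ(x) α⁻¹(y)) define a dendriform dialgebra structure on A with x*y = x≺y + x≻y for all x,y ∈ A. -/
/-- An invertible O-operator α : V → A on the A-bimodule
(V,ℓ,r) induces a dendriform dialgebra structure on A via
x ≺ y = α(α⁻¹(x) r(y)), x ≻ y = α(ℓ(x) α⁻¹(y)), with * = ≺ + ≻. -/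
theorem invertible_O_operator_dendriform_dialgebra_range
    (k : Type*) [CommRing k]
    (A : Type*) [AddCommGroup A] [Module k A]
    (V : Type*) [AddCommGroup V] [Module k V]
    (mulA : A →ₗ[k] A →ₗ[k] A)
    (mulA_assoc : ∀ x y z : A, mulA (mulA x y) z = mulA x (mulA y z))
    (l r : A →ₗ[k] Module.End k V)
    (hl : ∀ x y : A, ∀ v : V, l (mulA x y) v = l x (l y v))
    (hr : ∀ x y : A, ∀ v : V, r (mulA x y) v = r y (r x v))
    (hlr : ∀ x y : A, ∀ v : V, r y (l x v) = l x (r y v))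
    (α : V ≃ₗ[k] A)
    (hα : ∀ u v : V,
      mulA (α u) (α v) = α (l (α u) v) + α (r (α v) u)) :
    let prec : A → A → A := fun x y => α (r y (α.symm x))
    let succ : A → A → A := fun x y => α (l x (α.symm y))
    let star : A → A → A := fun x y => prec x y + succ x y
    -- dendriform dialgebra axioms
    (∀ x y z : A,
      prec (prec x y) z = prec x (star y z) ∧
      prec (succ x y) z = succ x (prec y z) ∧
      succ x (succ y z) = succ (star x y) z) ∧
    -- splitting of the associative product of A
    (∀ x y : A, mulA x y = star x y) := by
  intro prec succ star
  have hstar : ∀ x y : A, mulA x y = star x y := by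
    intro x y
    have := hα (α.symm x) (α.symm y)
    simp only [LinearEquiv.apply_symm_apply] at this
    simp only [star, prec, succ, this, add_comm]
  refine ⟨fun x y z => ⟨?_, ?_, ?_⟩, hstar⟩
  · show α (r z (α.symm (α (r y (α.symm x))))) = α (r (star y z) (α.symm x))
    rw [← hstar, LinearEquiv.symm_apply_apply, hr]
  · show α (r z (α.symm (α (l x (α.symm y))))) = α (l x (α.symm (α (r z (α.symm y)))))
    rw [LinearEquiv.symm_apply_apply, LinearEquiv.symm_apply_apply, hlr]
  · show α (l x (α.symm (α (l y (α.symm z))))) = α (l (star x y) (α.symm z))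
    rw [← hstar, LinearEquiv.symm_apply_apply, hl]
end

section
/- Let α : (R,∘,ℓ,r) → A be an O-operator on the algebra R of weight λ and f : A → A a k-algebra automorphism. Then (R, ∘, ℓ∘f⁻¹, r∘f⁻¹) is an A-bimodule k-algebra and f∘α : R → A is an O-operator on this algebra of weight λ. -/
/-- If α : R → A is an O-operator on the algebra (R,∘,ℓ,r) of
weight λ and f : A → A is a k-algebra automorphism, then (R,∘,ℓf⁻¹,rf⁻¹) is an
A-bimodule k-algebra and f ∘ α is an O-operator on it of weight λ. -/
theorem twisted_O_operator_by_automorphism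
    (k : Type*) [CommRing k]
    (A : Type*) [AddCommGroup A] [Module k A]
    (R : Type*) [AddCommGroup R] [Module k R]
    (mulA : A →ₗ[k] A →ₗ[k] A)
    (mulA_assoc : ∀ x y z : A, mulA (mulA x y) z = mulA x (mulA y z))
    (mulR : R →ₗ[k] R →ₗ[k] R)
    (mulR_assoc : ∀ u v w : R, mulR (mulR u v) w = mulR u (mulR v w))
    (l r : A →ₗ[k] Module.End k R)
    (hl : ∀ x y : A, ∀ v : R, l (mulA x y) v = l x (l y v))
    (hr : ∀ x y : A, ∀ v : R, r (mulA x y) v = r y (r x v))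
    (hlr : ∀ x y : A, ∀ v : R, r y (l x v) = l x (r y v))
    (hc1 : ∀ x : A, ∀ v w : R, l x (mulR v w) = mulR (l x v) w)
    (hc2 : ∀ x : A, ∀ v w : R, r x (mulR v w) = mulR v (r x w))
    (hc3 : ∀ x : A, ∀ v w : R, mulR (r x v) w = mulR v (l x w))
    (lam : k) (α : R →ₗ[k] A)
    (hα : ∀ u v : R,
      mulA (α u) (α v)
        = α (l (α u) v) + α (r (α v) u) + lam • α (mulR u v))
    -- f is a k-algebra automorphism of (A,*)
    (f : A ≃ₗ[k] A)
    (hf : ∀ x y : A, f (mulA x y) = mulA (f x) (f y)) :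
    -- (R, ∘, ℓ∘f⁻¹, r∘f⁻¹) is an A-bimodule k-algebra:
    (∀ x y : A, ∀ v : R,
      l (f.symm (mulA x y)) v = l (f.symm x) (l (f.symm y) v)) ∧
    (∀ x y : A, ∀ v : R,
      r (f.symm (mulA x y)) v = r (f.symm y) (r (f.symm x) v)) ∧
    (∀ x y : A, ∀ v : R,
      r (f.symm y) (l (f.symm x) v) = l (f.symm x) (r (f.symm y) v)) ∧
    (∀ x : A, ∀ v w : R, l (f.symm x) (mulR v w) = mulR (l (f.symm x) v) w) ∧
    (∀ x : A, ∀ v w : R, r (f.symm x) (mulR v w) = mulR v (r (f.symm x) w)) ∧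
    (∀ x : A, ∀ v w : R, mulR (r (f.symm x) v) w = mulR v (l (f.symm x) w)) ∧
    -- f ∘ α is an O-operator on this A-bimodule k-algebra of weight λ
    (∀ u v : R,
      mulA (f (α u)) (f (α v))
        = f (α (l (f.symm (f (α u))) v))
          + f (α (r (f.symm (f (α v))) u))
          + lam • f (α (mulR u v))) := by
  have hsymm : ∀ x y : A, f.symm (mulA x y) = mulA (f.symm x) (f.symm y) := by
    intro x y
    apply f.injective
    rw [f.apply_symm_apply, hf, f.apply_symm_apply, f.apply_symm_apply]
  refine ⟨?_, ?_, ?_, ?_, ?_, ?_, ?_⟩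
  · intro x y v; rw [hsymm, hl]
  · intro x y v; rw [hsymm, hr]
  · intro x y v; exact hlr _ _ _
  · intro x v w; exact hc1 _ _ _
  · intro x v w; exact hc2 _ _ _
  · intro x v w; exact hc3 _ _ _
  · intro u v
    rw [f.symm_apply_apply, f.symm_apply_apply, ← hf, hα, map_add, map_add, map_smul]
end
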